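/- For every integer n ≥ 1, the number of permutations of {1,…,n} simultaneously avoiding the patterns 123 and 132 equals 2^{n-1}. -/
import Mathlib


/-- A permutation `σ` of `{1,…,n}` contains the pattern `τ` (given in one-line
notation as a function `Fin k → ℕ`) if there is a strictly increasing choice of
indices along which `σ` is order-isomorphic to `τ`. -/
def Contains {n k : ℕ} (σ : Equiv.Perm (Fin n)) (τ : Fin k → ℕ) : Prop :=
  ∃ f : Fin k → Fin n, StrictMono f ∧ ∀ a b : Fin k, σ (f a) < σ (f b) ↔ τ a < τ b

/-- `σ` avoids the pattern `τ`. -/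
def Avoids {n k : ℕ} (σ : Equiv.Perm (Fin n)) (τ : Fin k → ℕ) : Prop :=
  ¬ Contains σ τ

def p123 : Fin 3 → ℕ := ![1, 2, 3]
def p132 : Fin 3 → ℕ := ![1, 3, 2]
def p213 : Fin 3 → ℕ := ![2, 1, 3]
def p1432 : Fin 4 → ℕ := ![1, 4, 3, 2]
def p3214 : Fin 4 → ℕ := ![3, 2, 1, 4]
def p2143 : Fin 4 → ℕ := ![2, 1, 4, 3]

/-- The pattern `q_k = 1 (k+1) k (k-1) ⋯ 2` of length `k+1` (one-line notation,
position `j` is 0-indexed here, values 1-indexed). -/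
def qpat (k : ℕ) : Fin (k + 1) → ℕ := fun j => if j.val = 0 then 1 else k + 2 - j.val

/-- The pattern `r_k = k (k-1) ⋯ 2 1 (k+1)` of length `k+1`. -/
def rpat (k : ℕ) : Fin (k + 1) → ℕ := fun j => if j.val = k then k + 1 else k - j.val

/-- The pattern `s_k = (k-1)(k-2) ⋯ 2 1 (k+1) k` of length `k+1`. -/
def spat (k : ℕ) : Fin (k + 1) → ℕ := fun j =>
  if j.val = k - 1 then k + 1 else if j.val = k then k else k - 1 - j.val

/-- The pattern `u_k = 2 1 (k+1) k (k-1) ⋯ 4 3` of length `k+1`. -/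
def upat (k : ℕ) : Fin (k + 1) → ℕ := fun j =>
  if j.val = 0 then 2 else if j.val = 1 then 1 else k + 3 - j.val

/-- The key structural condition: `σ` avoids `{123, 132}` iff every value
`σ i` is at least `n - 2 - i`, i.e. `n ≤ σ i + i + 2`. -/
def Dcond (n : ℕ) (σ : Equiv.Perm (Fin n)) : Prop :=
  ∀ i : Fin n, n ≤ (σ i : ℕ) + (i : ℕ) + 2

lemma contains_of_triple {n : ℕ} (σ : Equiv.Perm (Fin n)) {i j k : Fin n}
    (hij : i < j) (hjk : j < k) (h1 : σ i < σ j) (h2 : σ i < σ k) :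
    Contains σ p123 ∨ Contains σ p132 := by
  set f : Fin 3 → Fin n := fun a => if (a : ℕ) = 0 then i else if (a : ℕ) = 1 then j else k with hf
  have h1' : ((σ i : ℕ)) < (σ j : ℕ) := h1
  have h2' : ((σ i : ℕ)) < (σ k : ℕ) := h2
  have hij' : (i : ℕ) < (j : ℕ) := hij
  have hjk' : (j : ℕ) < (k : ℕ) := hjk
  have hne : σ j ≠ σ k := σ.injective.ne (ne_of_lt hjk)
  have hmono : StrictMono f := by
    intro a b hab
    have hab' : (a : ℕ) < (b : ℕ) := hab
    rcases a with ⟨av, ha⟩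
    rcases b with ⟨bv, hb⟩
    simp only [Fin.lt_def]
    interval_cases av <;> interval_cases bv <;> norm_num [hf] <;> omega
  rcases lt_or_gt_of_ne hne with h3 | h3
  · left
    refine ⟨f, hmono, ?_⟩
    have h3' : ((σ j : ℕ)) < (σ k : ℕ) := h3
    intro a b
    rcases a with ⟨av, ha⟩
    rcases b with ⟨bv, hb⟩
    rw [Fin.lt_def]
    interval_cases av <;> interval_cases bv <;> norm_num [hf, p123] <;> omega
  · right
    refine ⟨f, hmono, ?_⟩
    have h3' : ((σ k : ℕ)) < (σ j : ℕ) := h3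
    intro a b
    rcases a with ⟨av, ha⟩
    rcases b with ⟨bv, hb⟩
    rw [Fin.lt_def]
    interval_cases av <;> interval_cases bv <;> norm_num [hf, p132] <;> omega

lemma triple_of_contains {n : ℕ} (σ : Equiv.Perm (Fin n))
    (h : Contains σ p123 ∨ Contains σ p132) :
    ∃ i j k : Fin n, i < j ∧ j < k ∧ σ i < σ j ∧ σ i < σ k := by
  rcases h with ⟨f, hf, hiff⟩ | ⟨f, hf, hiff⟩
  · exact ⟨f 0, f 1, f 2, hf (by decide), hf (by decide),
      (hiff 0 1).mpr (by decide), (hiff 0 2).mpr (by decide)⟩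
  · exact ⟨f 0, f 1, f 2, hf (by decide), hf (by decide),
      (hiff 0 1).mpr (by decide), (hiff 0 2).mpr (by decide)⟩

lemma cardB {n : ℕ} (σ : Equiv.Perm (Fin n)) (i : Fin n) :
    (Finset.univ.filter fun q => σ i < σ q).card + (σ i : ℕ) + 1 = n := by
  have himg : Finset.image σ (Finset.univ.filter fun q => σ i < σ q)
      = Finset.Ioi (σ i) := by
    ext v
    simp only [Finset.mem_image, Finset.mem_filter, Finset.mem_univ, true_and,
      Finset.mem_Ioi]
    constructor
    · rintro ⟨q, hq, rfl⟩; exact hq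
    · intro hv; exact ⟨σ.symm v, by simpa using hv, by simp⟩
  have hcard := Finset.card_image_of_injective
    (Finset.univ.filter fun q => σ i < σ q) σ.injective
  rw [himg, Fin.card_Ioi] at hcard
  have := (σ i).is_lt
  omega

lemma two_big {n : ℕ} (σ : Equiv.Perm (Fin n)) (i : Fin n)
    (hfail : (σ i : ℕ) + (i : ℕ) + 3 ≤ n) :
    ∃ j k : Fin n, i < j ∧ j < k ∧ σ i < σ j ∧ σ i < σ k := by
  classical
  have hBcard := cardB σ i
  have hsub : (Finset.univ.filter fun q => σ i < σ q) ⊆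
      Finset.Iio i ∪ (Finset.univ.filter fun q => σ i < σ q ∧ i < q) := by
    intro q hq
    rw [Finset.mem_filter] at hq
    rcases lt_trichotomy q i with h | h | h
    · exact Finset.mem_union_left _ (Finset.mem_Iio.mpr h)
    · subst h; exact absurd hq.2 (lt_irrefl _)
    · exact Finset.mem_union_right _ (Finset.mem_filter.mpr ⟨hq.1, hq.2, h⟩)
  have hle := (Finset.card_le_card hsub).trans (Finset.card_union_le _ _)
  rw [Fin.card_Iio] at hle
  have h2 : 1 < (Finset.univ.filter fun q => σ i < σ q ∧ i < q).card := by omega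
  obtain ⟨j, hj, k, hk, hjk⟩ := Finset.one_lt_card.mp h2
  rw [Finset.mem_filter] at hj hk
  rcases lt_or_gt_of_ne hjk with h | h
  · exact ⟨j, k, hj.2.2, h, hj.2.1, hk.2.1⟩
  · exact ⟨k, j, hk.2.2, h, hk.2.1, hj.2.1⟩

lemma descend {n : ℕ} (σ : Equiv.Perm (Fin n)) (hD : Dcond n σ) {i j k : Fin n}
    (hij : i < j) (hjk : j < k) (h1 : σ i < σ j) (h2 : σ i < σ k) :
    ∃ p, p < i ∧ σ p < σ i := by
  classical
  by_contra hcon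
  push_neg at hcon
  have hall : ∀ p : Fin n, p < i → σ i < σ p := by
    intro p hp
    refine lt_of_le_of_ne (hcon p hp) ?_
    intro he
    exact ne_of_lt hp (σ.injective he.symm)
  have hBcard := cardB σ i
  have hsub : insert j (insert k (Finset.Iio i)) ⊆
      (Finset.univ.filter fun q => σ i < σ q) := by
    intro q hq
    simp only [Finset.mem_insert, Finset.mem_Iio] at hq
    rcases hq with rfl | rfl | hq
    · exact Finset.mem_filter.mpr ⟨Finset.mem_univ _, h1⟩
    · exact Finset.mem_filter.mpr ⟨Finset.mem_univ _, h2⟩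
    · exact Finset.mem_filter.mpr ⟨Finset.mem_univ _, hall _ hq⟩
  have hcards := Finset.card_le_card hsub
  have hjne : j ∉ insert k (Finset.Iio i) := by
    simp only [Finset.mem_insert, Finset.mem_Iio]
    push_neg
    exact ⟨ne_of_lt hjk, le_of_lt hij⟩
  have hkne : k ∉ Finset.Iio i := by
    simp only [Finset.mem_Iio]
    exact not_lt.mpr (le_of_lt (hij.trans hjk))
  rw [Finset.card_insert_of_notMem hjne, Finset.card_insert_of_notMem hkne,
    Fin.card_Iio] at hcards
  have hDi := hD i
  omega

lemma no_triple {n : ℕ} (σ : Equiv.Perm (Fin n)) (hD : Dcond n σ) :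
    ¬ ∃ i j k : Fin n, i < j ∧ j < k ∧ σ i < σ j ∧ σ i < σ k := by
  rintro ⟨i, j, k, hij, hjk, h1, h2⟩
  have key : ∀ m : ℕ, ∀ i j k : Fin n, (i : ℕ) ≤ m → i < j → j < k →
      σ i < σ j → σ i < σ k → False := by
    intro m
    induction m with
    | zero =>
      intro i j k him hij hjk h1 h2
      obtain ⟨p, hp, _⟩ := descend σ hD hij hjk h1 h2
      have := Fin.lt_def.mp hp
      omega
    | succ m ih =>
      intro i j k him hij hjk h1 h2
      obtain ⟨p, hp, hps⟩ := descend σ hD hij hjk h1 h2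
      have hpv := Fin.lt_def.mp hp
      exact ih p j k (by omega) (hp.trans hij) hjk (hps.trans h1) (hps.trans h2)
  exact key (i : ℕ) i j k le_rfl hij hjk h1 h2

lemma avoids_iff_D {n : ℕ} (σ : Equiv.Perm (Fin n)) :
    (Avoids σ p123 ∧ Avoids σ p132) ↔ Dcond n σ := by
  constructor
  · intro ⟨ha, hb⟩ i
    by_contra hlt
    push_neg at hlt
    obtain ⟨j, k, hij, hjk, h1, h2⟩ := two_big σ i (by omega)
    rcases contains_of_triple σ hij hjk h1 h2 with h | h
    · exact ha h
    · exact hb h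
  · intro hD
    constructor
    · intro h
      exact no_triple σ hD (triple_of_contains σ (Or.inl h))
    · intro h
      exact no_triple σ hD (triple_of_contains σ (Or.inr h))

section ins
variable {n : ℕ}

def insFun (p : Fin (n + 1)) (e : Equiv.Perm (Fin n)) : Fin (n + 1) → Fin (n + 1) :=
  Fin.cases p (fun x => p.succAbove (e x))

lemma insFun_inj (p : Fin (n + 1)) (e : Equiv.Perm (Fin n)) :
    Function.Injective (insFun p e) := by
  intro a b h
  induction a using Fin.cases with
  | zero =>
    induction b using Fin.cases with
    | zero => rfl
    | succ y =>
      simp only [insFun, Fin.cases_zero, Fin.cases_succ] at h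
      exact absurd h.symm (Fin.succAbove_ne p (e y))
  | succ x =>
    induction b using Fin.cases with
    | zero =>
      simp only [insFun, Fin.cases_zero, Fin.cases_succ] at h
      exact absurd h (Fin.succAbove_ne p (e x))
    | succ y =>
      simp only [insFun, Fin.cases_succ] at h
      have := e.injective (Fin.succAbove_right_injective h)
      rw [this]

noncomputable def insPerm (p : Fin (n + 1)) (e : Equiv.Perm (Fin n)) :
    Equiv.Perm (Fin (n + 1)) :=
  Equiv.ofBijective _ (Finite.injective_iff_bijective.mp (insFun_inj p e))

@[simp] lemma insPerm_zero (p : Fin (n + 1)) (e : Equiv.Perm (Fin n)) :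
    insPerm p e 0 = p := rfl

@[simp] lemma insPerm_succ (p : Fin (n + 1)) (e : Equiv.Perm (Fin n)) (x : Fin n) :
    insPerm p e x.succ = p.succAbove (e x) := rfl

lemma le_succAbove_val (p : Fin (n + 1)) (v : Fin n) :
    (v : ℕ) ≤ (p.succAbove v : ℕ) := by
  rcases Fin.lt_or_le v.castSucc p with h | h
  · rw [Fin.succAbove_of_castSucc_lt _ _ h]; simp
  · rw [Fin.succAbove_of_le_castSucc _ _ h]; simp [Fin.val_succ]

end ins

lemma card_step (n : ℕ) (hn : 1 ≤ n) :
    Nat.card {σ : Equiv.Perm (Fin (n + 1)) // Dcond (n + 1) σ}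
      = 2 * Nat.card {σ : Equiv.Perm (Fin n) // Dcond n σ} := by
  classical
  have hn1 : n - 1 < n + 1 := by omega
  set pf : Bool → Fin (n + 1) := fun b => if b then Fin.last n else ⟨n - 1, hn1⟩ with hpf
  have hpfval : ∀ b, ((pf b : Fin (n+1)) : ℕ) = if b then n else n - 1 := by
    intro b; cases b <;> simp [hpf]
  have hDins : ∀ (b : Bool) (e : Equiv.Perm (Fin n)), Dcond n e →
      Dcond (n + 1) (insPerm (pf b) e) := by
    intro b e he i
    induction i using Fin.cases with
    | zero =>
      have := hpfval b
      simp only [insPerm_zero, Fin.val_zero]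
      cases b <;> simp_all <;> omega
    | succ x =>
      have h1 := le_succAbove_val (pf b) (e x)
      have h2 := he x
      simp only [insPerm_succ, Fin.val_succ]
      omega
  let Φ : Bool × {σ : Equiv.Perm (Fin n) // Dcond n σ} →
      {σ : Equiv.Perm (Fin (n + 1)) // Dcond (n + 1) σ} :=
    fun be => ⟨insPerm (pf be.1) be.2.1, hDins be.1 be.2.1 be.2.2⟩
  have hbij : Function.Bijective Φ := by
    constructor
    · rintro ⟨b, e, he⟩ ⟨b', e', he'⟩ h
      rw [Subtype.mk_eq_mk] at h
      have h0 : pf b = pf b' := by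
        have := congrArg (fun σ : Equiv.Perm (Fin (n+1)) => σ 0) h
        simpa using this
      have h0v : ((pf b : Fin (n+1)) : ℕ) = ((pf b' : Fin (n+1)) : ℕ) := congrArg Fin.val h0
      rw [hpfval, hpfval] at h0v
      have hb : b = b' := by
        cases b <;> cases b' <;>
          first
          | rfl
          | (exfalso
             simp only [Bool.false_eq_true, if_true, if_false] at h0v
             omega)
      subst hb
      have he2 : e = e' := by
        ext x
        have := congrArg (fun σ : Equiv.Perm (Fin (n+1)) => σ x.succ) h
        simp only [insPerm_succ] at this
        exact Fin.val_eq_of_eq (Fin.succAbove_right_injective this)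
      exact congrArg (Prod.mk b) (Subtype.ext he2)
    · rintro ⟨σ, hσ⟩
      have hp : ((σ 0 : Fin (n+1)) : ℕ) = n - 1 ∨ ((σ 0 : Fin (n+1)) : ℕ) = n := by
        have := hσ 0
        have := (σ 0).is_lt
        simp only [Fin.val_zero] at *
        omega
      have hne : ∀ x : Fin n, σ x.succ ≠ σ 0 :=
        fun x => σ.injective.ne (Fin.succ_ne_zero x)
      have hex : ∀ x : Fin n, ∃ v : Fin n, (σ 0).succAbove v = σ x.succ :=
        fun x => Fin.exists_succAbove_eq (hne x)
      set e0 : Fin n → Fin n := fun x => (hex x).choose with he0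
      have he0spec : ∀ x, (σ 0).succAbove (e0 x) = σ x.succ := fun x => (hex x).choose_spec
      have he0inj : Function.Injective e0 := by
        intro x y h
        have : σ x.succ = σ y.succ := by rw [← he0spec, ← he0spec, h]
        exact Fin.succ_injective _ (σ.injective this)
      set e : Equiv.Perm (Fin n) :=
        Equiv.ofBijective e0 (Finite.injective_iff_bijective.mp he0inj) with he
      have heapp : ∀ x, e x = e0 x := fun x => rfl
      have hDe : Dcond n e := by
        intro x
        rw [heapp]
        rcases Nat.lt_or_ge ((e0 x : ℕ) + 1) n with hlt | hge
        · have hcast : ((e0 x).castSucc : Fin (n+1)) < σ 0 := by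
            rw [Fin.lt_def]
            simp only [Fin.coe_castSucc]
            omega
          have := he0spec x
          rw [Fin.succAbove_of_castSucc_lt _ _ hcast] at this
          have hval : ((e0 x : ℕ)) = (σ x.succ : ℕ) := by
            rw [← this]; simp
          have := hσ x.succ
          simp only [Fin.val_succ] at this
          omega
        · omega
      have main : ∀ b : Bool, pf b = σ 0 → ∃ a, Φ a = ⟨σ, hσ⟩ := by
        intro b hpfeq
        refine ⟨⟨b, e, hDe⟩, ?_⟩
        apply Subtype.ext
        simp only [Φ]
        apply Equiv.ext
        intro i
        induction i using Fin.cases with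
        | zero => simp [hpfeq]
        | succ x => rw [insPerm_succ, hpfeq, heapp, he0spec]
      rcases hp with h | h
      · refine main false (Fin.ext ?_)
        have hv := hpfval false
        simp only [Bool.false_eq_true, if_false] at hv
        omega
      · refine main true (Fin.ext ?_)
        have hv := hpfval true
        simp only [if_true] at hv
        omega
  rw [← Nat.card_eq_of_bijective Φ hbij, Nat.card_prod]
  simp

lemma card_base : Nat.card {σ : Equiv.Perm (Fin 1) // Dcond 1 σ} = 1 := by
  have h : ∀ σ : Equiv.Perm (Fin 1), Dcond 1 σ := by
    intro σ i
    omega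
  rw [Nat.card_congr (Equiv.subtypeUnivEquiv h)]
  simp [Nat.card_eq_fintype_card]

lemma count_D (n : ℕ) (hn : 1 ≤ n) :
    Nat.card {σ : Equiv.Perm (Fin n) // Dcond n σ} = 2 ^ (n - 1) := by
  induction n, hn using Nat.le_induction with
  | base => simpa using card_base
  | succ n hn ih =>
    rw [card_step n hn, ih, ← pow_succ', Nat.sub_add_cancel hn]
    congr 1

theorem stmt3 (n : ℕ) (hn : 1 ≤ n) :
    Nat.card {σ : Equiv.Perm (Fin n) // Avoids σ p123 ∧ Avoids σ p132} = 2 ^ (n - 1) := by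
  rw [Nat.card_congr (Equiv.subtypeEquivRight (fun σ => avoids_iff_D σ))]
  exact count_D n hn
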